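/- Suppose the probability space Ω is finite. Then for every tax rate α ∈ [0,1) and every initial capital x ∈ ℝ, the set {V^α(x,N) : N ∈ 𝒩} − L^0(ℱ_T; ℝ_+) of attainable after-tax terminal wealths is closed with respect to the supremum norm — even if the no-arbitrage condition fails. -/

import Mathlib

open MeasureTheory Filter Finset

noncomputable section
open scoped Classical

section Poly
variable {E : Type*} [AddCommGroup E] [Module ℝ E]

/-- `s` is a (closed, H-representation) polyhedron. -/
def PolyH (s : Set E) : Prop :=
  ∃ (ι : Type) (_ : Fintype ι) (L : ι → E →ₗ[ℝ] ℝ) (c : ι → ℝ),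
    s = {x | ∀ i, L i x ≤ c i}

/-- `s` is a finite union of polyhedra. -/
def PUn (s : Set E) : Prop :=
  ∃ (ι : Type) (_ : Fintype ι) (P : ι → Set E),
    (∀ i, PolyH (P i)) ∧ s = ⋃ i, P i

theorem polyH_univ : PolyH (Set.univ : Set E) :=
  ⟨PEmpty, inferInstance, fun i => i.elim, fun i => i.elim, by ext x; simp⟩

theorem polyH_setOf_le (L : E →ₗ[ℝ] ℝ) (c : ℝ) : PolyH {x : E | L x ≤ c} :=
  ⟨PUnit, inferInstance, fun _ => L, fun _ => c, by ext x; simp⟩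

theorem polyH_iInter {κ : Type} [Fintype κ] {P : κ → Set E} (h : ∀ i, PolyH (P i)) :
    PolyH (⋂ i, P i) := by
  choose ι hι L c hP using h
  exact ⟨Σ i, ι i, by infer_instance, fun p => L p.1 p.2, fun p => c p.1 p.2, by
    ext x
    simp only [Set.mem_iInter, Set.mem_setOf_eq, Sigma.forall]
    constructor
    · intro hx i j; have := hx i; rw [hP i] at this; exact this j
    · intro hx i; rw [hP i]; exact fun j => hx i j⟩

theorem PolyH.inter {s t : Set E} (hs : PolyH s) (ht : PolyH t) : PolyH (s ∩ t) := by
  have : s ∩ t = ⋂ b : Bool, (if b then s else t) := by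
    ext x; simp [Set.mem_iInter, Bool.forall_bool, and_comm]
  rw [this]
  exact polyH_iInter fun b => by cases b <;> simpa

theorem PolyH.preimage {F : Type*} [AddCommGroup F] [Module ℝ F]
    {s : Set E} (hs : PolyH s) (φ : F →ₗ[ℝ] E) : PolyH (φ ⁻¹' s) := by
  obtain ⟨ι, hι, L, c, rfl⟩ := hs
  exact ⟨ι, hι, fun i => (L i).comp φ, c, rfl⟩

theorem PolyH.isClosed [TopologicalSpace E] [IsTopologicalAddGroup E]
    [ContinuousSMul ℝ E] [T2Space E] [FiniteDimensional ℝ E]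
    {s : Set E} (hs : PolyH s) : IsClosed s := by
  obtain ⟨ι, hι, L, c, rfl⟩ := hs
  have : {x : E | ∀ i, L i x ≤ c i} = ⋂ i, {x | L i x ≤ c i} := by ext x; simp
  rw [this]
  exact isClosed_iInter fun i =>
    IsClosed.preimage (L i).continuous_of_finiteDimensional isClosed_Iic

theorem PolyH.pUn {s : Set E} (hs : PolyH s) : PUn s :=
  ⟨PUnit, inferInstance, fun _ => s, fun _ => hs, (Set.iUnion_const s).symm⟩

theorem pUn_iUnion {κ : Type} [Fintype κ] {P : κ → Set E} (h : ∀ i, PUn (P i)) :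
    PUn (⋃ i, P i) := by
  choose ι hι Q hQ hP using h
  refine ⟨Σ i, ι i, by infer_instance, fun p => Q p.1 p.2, fun p => hQ p.1 p.2, ?_⟩
  simp only [hP]
  ext x; simp [Sigma.exists]

theorem pUn_iInter {κ : Type} [Fintype κ] {P : κ → Set E} (h : ∀ i, PUn (P i)) :
    PUn (⋂ i, P i) := by
  choose ι hι Q hQ hP using h
  have key : ⋂ i, P i = ⋃ f : ∀ i, ι i, ⋂ i, Q i (f i) := by
    ext x
    simp only [Set.mem_iInter, Set.mem_iUnion, hP, Set.mem_iUnion]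
    constructor
    · intro hx
      choose f hf using hx
      exact ⟨f, hf⟩
    · rintro ⟨f, hf⟩ i
      exact ⟨f i, hf i⟩
  rw [key]
  exact pUn_iUnion fun f => (polyH_iInter fun i => hQ i (f i)).pUn

theorem PUn.inter {s t : Set E} (hs : PUn s) (ht : PUn t) : PUn (s ∩ t) := by
  have : s ∩ t = ⋂ b : Bool, (if b then s else t) := by
    ext x; simp [Set.mem_iInter, Bool.forall_bool, and_comm]
  rw [this]
  exact pUn_iInter fun b => by cases b <;> simpa

theorem PUn.union {s t : Set E} (hs : PUn s) (ht : PUn t) : PUn (s ∪ t) := by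
  have : s ∪ t = ⋃ b : Bool, (if b then s else t) := by
    ext x; simp [Set.mem_iUnion, Bool.exists_bool, or_comm]
  rw [this]
  exact pUn_iUnion fun b => by cases b <;> simpa

theorem PUn.preimage {F : Type*} [AddCommGroup F] [Module ℝ F]
    {s : Set E} (hs : PUn s) (φ : F →ₗ[ℝ] E) : PUn (φ ⁻¹' s) := by
  obtain ⟨ι, hι, P, hP, rfl⟩ := hs
  exact ⟨ι, hι, fun i => φ ⁻¹' P i, fun i => (hP i).preimage φ, by
    simp [Set.preimage_iUnion]⟩

theorem PUn.isClosed [TopologicalSpace E] [IsTopologicalAddGroup E]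
    [ContinuousSMul ℝ E] [T2Space E] [FiniteDimensional ℝ E]
    {s : Set E} (hs : PUn s) : IsClosed s := by
  obtain ⟨ι, hι, P, hP, rfl⟩ := hs
  exact isClosed_iUnion_of_finite fun i => (hP i).isClosed


/-- Fourier–Motzkin elimination: the projection of a polyhedron in `ℝ × E` to `E`
is a polyhedron. -/
theorem PolyH.image_snd {s : Set (ℝ × E)} (hs : PolyH s) : PolyH (Prod.snd '' s) := by
  obtain ⟨ι, hι, L, c, rfl⟩ := hs
  set a : ι → ℝ := fun i => L i (1, 0) with ha
  set B : ι → E →ₗ[ℝ] ℝ := fun i => (L i).comp (LinearMap.inr ℝ ℝ E) with hB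
  have hL : ∀ (i : ι) (t : ℝ) (y : E), L i (t, y) = t * a i + B i y := by
    intro i t y
    have h1 : ((t, y) : ℝ × E) = t • ((1 : ℝ), (0 : E)) + ((0 : ℝ), y) := by
      simp [Prod.ext_iff]
    rw [h1, map_add, _root_.map_smul, smul_eq_mul]
    rfl
  classical
  refine ⟨ι ⊕ ι × ι, inferInstance,
    Sum.elim (fun i => if a i = 0 then B i else 0)
      (fun pq => if 0 < a pq.1 ∧ a pq.2 < 0
        then a pq.1 • B pq.2 - a pq.2 • B pq.1 else 0),
    Sum.elim (fun i => if a i = 0 then c i else 0)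
      (fun pq => if 0 < a pq.1 ∧ a pq.2 < 0
        then a pq.1 * c pq.2 - a pq.2 * c pq.1 else 0), ?_⟩
  ext y
  simp only [Set.mem_image, Set.mem_setOf_eq]
  constructor
  · rintro ⟨⟨t, y'⟩, hmem, rfl⟩
    have hmem' : ∀ i, t * a i + B i y' ≤ c i := fun i => by
      have := hmem i; rwa [hL] at this
    rintro (i | ⟨p, q⟩)
    · by_cases h0 : a i = 0
      · simpa [h0] using hmem' i
      · simp [h0]
    · by_cases hpq : 0 < a p ∧ a q < 0
      · obtain ⟨hp, hq⟩ := hpq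
        simp only [Sum.elim_inr, if_pos (And.intro hp hq), LinearMap.sub_apply,
          LinearMap.smul_apply, smul_eq_mul]
        have e1 : a p * (t * a q + B q y') ≤ a p * c q :=
          mul_le_mul_of_nonneg_left (hmem' q) hp.le
        have e2 : a q * c p ≤ a q * (t * a p + B p y') :=
          mul_le_mul_of_nonpos_left (hmem' p) hq.le
        nlinarith [e1, e2]
      · simp [hpq]
  · intro hy
    have hy0 : ∀ i, a i = 0 → B i y ≤ c i := by
      intro i h0
      have := hy (Sum.inl i)
      simpa [h0] using this
    have hypq : ∀ p q, 0 < a p → a q < 0 →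
        a p * B q y - a q * B p y ≤ a p * c q - a q * c p := by
      intro p q hp hq
      have := hy (Sum.inr (p, q))
      simpa [if_pos (And.intro hp hq)] using this
    suffices h : ∃ t : ℝ, ∀ i, t * a i + B i y ≤ c i by
      obtain ⟨t, ht⟩ := h
      exact ⟨(t, y), fun i => by rw [hL]; exact ht i, rfl⟩
    classical
    set Ip : Finset ι := Finset.univ.filter (fun i => 0 < a i) with hIp
    set Iq : Finset ι := Finset.univ.filter (fun i => a i < 0) with hIq
    have keyle : ∀ q ∈ Iq, ∀ p ∈ Ip,
        (c q - B q y) / a q ≤ (c p - B p y) / a p := by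
      intro q hq' p hp'
      have hq : a q < 0 := (Finset.mem_filter.1 hq').2
      have hp : 0 < a p := (Finset.mem_filter.1 hp').2
      have h := hypq p q hp hq
      rw [div_le_iff_of_neg hq, div_mul_eq_mul_div, div_le_iff₀ hp]
      nlinarith [h]
    -- helper to conclude from a bound on t
    have concl : ∀ (t : ℝ) i,
        (a i < 0 → (c i - B i y) / a i ≤ t) → (0 < a i → t ≤ (c i - B i y) / a i) →
        t * a i + B i y ≤ c i := by
      intro t i hneg hpos
      rcases lt_trichotomy (a i) 0 with hi | hi | hi
      · have h1 : t * a i ≤ ((c i - B i y) / a i) * a i :=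
          mul_le_mul_of_nonpos_right (hneg hi) hi.le
        rw [div_mul_cancel₀ _ hi.ne] at h1
        linarith
      · have := hy0 i hi
        rw [hi]; linarith
      · have h1 : t * a i ≤ ((c i - B i y) / a i) * a i :=
          mul_le_mul_of_nonneg_right (hpos hi) hi.le
        rw [div_mul_cancel₀ _ hi.ne'] at h1
        linarith
    by_cases hp : Ip.Nonempty
    · set t := Ip.inf' hp (fun p => (c p - B p y) / a p) with hts
      refine ⟨t, fun i => concl t i ?_ ?_⟩
      · intro hi
        exact Finset.le_inf' hp _ fun p hp' =>
          keyle i (Finset.mem_filter.2 ⟨Finset.mem_univ i, hi⟩) p hp'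
      · intro hi
        exact Finset.inf'_le (fun p => (c p - B p y) / a p) (Finset.mem_filter.2 ⟨Finset.mem_univ i, hi⟩)
    · by_cases hq : Iq.Nonempty
      · set t := Iq.sup' hq (fun q => (c q - B q y) / a q) with hts
        refine ⟨t, fun i => concl t i ?_ ?_⟩
        · intro hi
          exact Finset.le_sup' (fun q => (c q - B q y) / a q) (Finset.mem_filter.2 ⟨Finset.mem_univ i, hi⟩)
        · intro hi
          exact absurd ⟨i, Finset.mem_filter.2 ⟨Finset.mem_univ i, hi⟩⟩ hp
      · refine ⟨0, fun i => concl 0 i ?_ ?_⟩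
        · intro hi; exact absurd ⟨i, Finset.mem_filter.2 ⟨Finset.mem_univ i, hi⟩⟩ hq
        · intro hi; exact absurd ⟨i, Finset.mem_filter.2 ⟨Finset.mem_univ i, hi⟩⟩ hp


theorem PUn.image_snd {s : Set (ℝ × E)} (hs : PUn s) : PUn (Prod.snd '' s) := by
  obtain ⟨ι, hι, P, hP, rfl⟩ := hs
  rw [Set.image_iUnion]
  exact pUn_iUnion fun i => ((hP i).image_snd).pUn

/-- `Fin.cons` as a linear map `ℝ × (Fin n → ℝ) →ₗ (Fin (n+1) → ℝ)` paired with `E`. -/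
private def consL (n : ℕ) (E : Type*) [AddCommGroup E] [Module ℝ E] :
    (ℝ × ((Fin n → ℝ) × E)) →ₗ[ℝ] ((Fin (n + 1) → ℝ) × E) where
  toFun p := (Fin.cons p.1 p.2.1, p.2.2)
  map_add' p q := by
    refine Prod.ext ?_ rfl
    funext i
    refine Fin.cases ?_ (fun j => ?_) i <;> simp
  map_smul' r p := by
    refine Prod.ext ?_ rfl
    funext i
    refine Fin.cases ?_ (fun j => ?_) i <;> simp

theorem pUn_image_snd_pi : ∀ (n : ℕ) (s : Set ((Fin n → ℝ) × E)), PUn s →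
    PUn (Prod.snd '' s) := by
  intro n
  induction n with
  | zero =>
    intro s hs
    have : Prod.snd '' s = (LinearMap.inr ℝ (Fin 0 → ℝ) E) ⁻¹' s := by
      ext y
      simp only [Set.mem_image, Set.mem_preimage, LinearMap.inr_apply]
      constructor
      · rintro ⟨⟨z, y⟩, hz, rfl⟩
        have : z = 0 := Subsingleton.elim _ _
        rwa [this] at hz
      · intro h; exact ⟨(0, y), h, rfl⟩
    rw [this]
    exact hs.preimage _
  | succ n ih =>
    intro s hs
    have key : Prod.snd '' s = Prod.snd '' (Prod.snd '' ((consL n E) ⁻¹' s)) := by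
      ext y
      simp only [Set.mem_image, Set.mem_preimage]
      constructor
      · rintro ⟨⟨x, y⟩, hx, rfl⟩
        refine ⟨(Fin.tail x, y), ⟨(x 0, (Fin.tail x, y)), ?_, rfl⟩, rfl⟩
        simpa [consL, Fin.cons_self_tail] using hx
      · rintro ⟨⟨z, y⟩, ⟨⟨a, p⟩, hp, h2⟩, rfl⟩
        cases h2
        exact ⟨(Fin.cons a z, y), hp, rfl⟩
    rw [key]
    exact ih _ ((hs.preimage _).image_snd)

theorem pUn_image_snd_fun {ι : Type*} [Fintype ι] {s : Set ((ι → ℝ) × E)}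
    (hs : PUn s) : PUn (Prod.snd '' s) := by
  classical
  obtain ⟨n, ⟨eι⟩⟩ : ∃ n, Nonempty (ι ≃ Fin n) := ⟨Fintype.card ι, ⟨Fintype.equivFin ι⟩⟩
  set ψ : ((Fin n → ℝ) × E) →ₗ[ℝ] ((ι → ℝ) × E) :=
    (LinearMap.funLeft ℝ ℝ eι).prodMap LinearMap.id with hψ
  have key : Prod.snd '' s = Prod.snd '' (ψ ⁻¹' s) := by
    ext y
    simp only [Set.mem_image, Set.mem_preimage]
    constructor
    · rintro ⟨⟨x, y⟩, hx, rfl⟩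
      refine ⟨(x ∘ eι.symm, y), ?_, rfl⟩
      have : (LinearMap.funLeft ℝ ℝ eι) (x ∘ eι.symm) = x := by
        funext i; simp [LinearMap.funLeft]
      simpa [hψ, this] using hx
    · rintro ⟨⟨z, y⟩, hz, rfl⟩
      exact ⟨ψ (z, y), hz, rfl⟩
  rw [key]
  exact pUn_image_snd_pi n _ (hs.preimage _)


/-- `f : E → ℝ` is piecewise affine with a finite polyhedral cover. -/
def PLF (f : E → ℝ) : Prop :=
  ∃ (ι : Type) (_ : Fintype ι) (P : ι → Set E) (L : ι → E →ₗ[ℝ] ℝ) (c : ι → ℝ),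
    (∀ i, PolyH (P i)) ∧ (⋃ i, P i) = Set.univ ∧ ∀ i, ∀ x ∈ P i, f x = L i x + c i

theorem PLF.affine (L : E →ₗ[ℝ] ℝ) (c : ℝ) : PLF (fun x => L x + c) :=
  ⟨PUnit, inferInstance, fun _ => Set.univ, fun _ => L, fun _ => c,
    fun _ => polyH_univ, Set.iUnion_const _, fun _ x _ => rfl⟩

theorem PLF.const (c : ℝ) : PLF (fun _ : E => c) := by
  have := PLF.affine (0 : E →ₗ[ℝ] ℝ) c
  simpa using this

theorem PLF.linear (L : E →ₗ[ℝ] ℝ) : PLF (fun x => L x) := by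
  have := PLF.affine L 0
  simpa using this

theorem PLF.add {f g : E → ℝ} (hf : PLF f) (hg : PLF g) : PLF (fun x => f x + g x) := by
  obtain ⟨ι, hι, P, L, c, hP, hcov, hval⟩ := hf
  obtain ⟨κ, hκ, Q, L', c', hQ, hcov', hval'⟩ := hg
  refine ⟨ι × κ, inferInstance, fun p => P p.1 ∩ Q p.2, fun p => L p.1 + L' p.2,
    fun p => c p.1 + c' p.2, fun p => (hP p.1).inter (hQ p.2), ?_, ?_⟩
  · ext x
    simp only [Set.mem_iUnion, Set.mem_inter_iff, Set.mem_univ, iff_true, Prod.exists]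
    have h1 : x ∈ ⋃ i, P i := hcov ▸ Set.mem_univ x
    have h2 : x ∈ ⋃ j, Q j := hcov' ▸ Set.mem_univ x
    obtain ⟨i, hi⟩ := Set.mem_iUnion.1 h1
    obtain ⟨j, hj⟩ := Set.mem_iUnion.1 h2
    exact ⟨i, j, hi, hj⟩
  · rintro ⟨i, j⟩ x ⟨hxi, hxj⟩
    simp only [LinearMap.add_apply]
    rw [hval i x hxi, hval' j x hxj]; ring

theorem PLF.smul (r : ℝ) {f : E → ℝ} (hf : PLF f) : PLF (fun x => r * f x) := by
  obtain ⟨ι, hι, P, L, c, hP, hcov, hval⟩ := hf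
  refine ⟨ι, hι, P, fun i => r • L i, fun i => r * c i, hP, hcov, ?_⟩
  intro i x hx
  simp only [LinearMap.smul_apply, smul_eq_mul]
  rw [hval i x hx]; ring

theorem PLF.neg {f : E → ℝ} (hf : PLF f) : PLF (fun x => -f x) := by
  have := hf.smul (-1)
  simpa using this

theorem PLF.sub {f g : E → ℝ} (hf : PLF f) (hg : PLF g) : PLF (fun x => f x - g x) := by
  have := hf.add hg.neg
  simpa [sub_eq_add_neg] using this

theorem PLF.max {f g : E → ℝ} (hf : PLF f) (hg : PLF g) :
    PLF (fun x => max (f x) (g x)) := by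
  obtain ⟨ι, hι, P, L, c, hP, hcov, hval⟩ := hf
  obtain ⟨κ, hκ, Q, L', c', hQ, hcov', hval'⟩ := hg
  classical
  refine ⟨ι × κ × Bool, inferInstance,
    fun p => if p.2.2
      then P p.1 ∩ Q p.2.1 ∩ {x | (L' p.2.1 - L p.1) x ≤ c p.1 - c' p.2.1}
      else P p.1 ∩ Q p.2.1 ∩ {x | (L p.1 - L' p.2.1) x ≤ c' p.2.1 - c p.1},
    fun p => if p.2.2 then L p.1 else L' p.2.1,
    fun p => if p.2.2 then c p.1 else c' p.2.1, ?_, ?_, ?_⟩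
  · rintro ⟨i, j, b⟩
    cases b <;>
      simp only [if_true, if_false, Bool.false_eq_true] <;>
      exact ((hP i).inter (hQ j)).inter (polyH_setOf_le _ _)
  · ext x
    simp only [Set.mem_iUnion, Set.mem_univ, iff_true, Prod.exists]
    have h1 : x ∈ ⋃ i, P i := hcov ▸ Set.mem_univ x
    have h2 : x ∈ ⋃ j, Q j := hcov' ▸ Set.mem_univ x
    obtain ⟨i, hi⟩ := Set.mem_iUnion.1 h1
    obtain ⟨j, hj⟩ := Set.mem_iUnion.1 h2
    rcases le_total (g x) (f x) with h | h
    · refine ⟨i, j, true, ?_⟩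
      simp only [if_true, Set.mem_inter_iff, Set.mem_setOf_eq, LinearMap.sub_apply]
      refine ⟨⟨hi, hj⟩, ?_⟩
      have := hval i x hi; have := hval' j x hj
      linarith [hval i x hi, hval' j x hj]
    · refine ⟨i, j, false, ?_⟩
      simp only [Bool.false_eq_true, if_false, Set.mem_inter_iff, Set.mem_setOf_eq,
        LinearMap.sub_apply]
      refine ⟨⟨hi, hj⟩, ?_⟩
      linarith [hval i x hi, hval' j x hj]
  · rintro ⟨i, j, b⟩ x hx
    cases b
    · simp only [Bool.false_eq_true, if_false, Set.mem_inter_iff, Set.mem_setOf_eq,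
        LinearMap.sub_apply] at hx ⊢
      obtain ⟨⟨hi, hj⟩, hle⟩ := hx
      have h1 := hval i x hi; have h2 := hval' j x hj
      rw [max_eq_right (by linarith), h2]
    · simp only [if_true, Set.mem_inter_iff, Set.mem_setOf_eq, LinearMap.sub_apply] at hx ⊢
      obtain ⟨⟨hi, hj⟩, hle⟩ := hx
      have h1 := hval i x hi; have h2 := hval' j x hj
      rw [max_eq_left (by linarith), h1]

theorem PLF.comp {F : Type*} [AddCommGroup F] [Module ℝ F] {f : E → ℝ}
    (hf : PLF f) (φ : F →ₗ[ℝ] E) : PLF (fun x => f (φ x)) := by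
  obtain ⟨ι, hι, P, L, c, hP, hcov, hval⟩ := hf
  refine ⟨ι, hι, fun i => φ ⁻¹' P i, fun i => (L i).comp φ, c,
    fun i => (hP i).preimage φ, ?_, fun i x hx => hval i (φ x) hx⟩
  ext x
  simp only [Set.mem_iUnion, Set.mem_preimage, Set.mem_univ, iff_true]
  have h1 : φ x ∈ ⋃ i, P i := hcov ▸ Set.mem_univ _
  exact Set.mem_iUnion.1 h1

theorem PLF.finset_sum {κ : Type*} (s : Finset κ) (f : κ → E → ℝ)
    (h : ∀ i ∈ s, PLF (f i)) : PLF (fun x => ∑ i ∈ s, f i x) := by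
  classical
  induction s using Finset.cons_induction with
  | empty => simpa using PLF.const 0
  | cons a s ha ih =>
    simp only [Finset.sum_cons]
    exact (h a (Finset.mem_cons_self a s)).add
      (ih fun i hi => h i (Finset.mem_cons_of_mem hi))

theorem PLF.finset_sup' {κ : Type*} (s : Finset κ) (hs : s.Nonempty) (f : κ → E → ℝ)
    (h : ∀ i ∈ s, PLF (f i)) : PLF (fun x => s.sup' hs (fun i => f i x)) := by
  classical
  induction hs using Finset.Nonempty.cons_induction with
  | singleton a => simpa using h a (Finset.mem_singleton_self a)
  | cons a s ha hs ih =>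
    have h1 : PLF (f a) := h a (Finset.mem_cons_self a s)
    have h2 : PLF (fun x => s.sup' hs fun i => f i x) :=
      ih fun i hi => h i (Finset.mem_cons_of_mem hi)
    have h3 := h1.max h2
    have : (fun x => (Finset.cons a s ha).sup' (Finset.cons_nonempty ha) fun i => f i x)
        = fun x => Max.max (f a x) (s.sup' hs fun i => f i x) := by
      funext x
      rw [Finset.sup'_cons hs]
    rw [this]
    exact h3

theorem pUn_le {f g : E → ℝ} (hf : PLF f) (hg : PLF g) : PUn {x | f x ≤ g x} := by
  have hd : PLF (fun x => f x - g x) := hf.sub hg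
  obtain ⟨ι, hι, P, L, c, hP, hcov, hval⟩ := hd
  refine ⟨ι, hι, fun i => P i ∩ {x | L i x ≤ -c i}, fun i => (hP i).inter
    (polyH_setOf_le _ _), ?_⟩
  ext x
  simp only [Set.mem_setOf_eq, Set.mem_iUnion, Set.mem_inter_iff]
  constructor
  · intro hx
    have h1 : x ∈ ⋃ i, P i := hcov ▸ Set.mem_univ x
    obtain ⟨i, hi⟩ := Set.mem_iUnion.1 h1
    refine ⟨i, hi, ?_⟩
    have h0 : f x - g x = L i x + c i := hval i x hi
    show L i x ≤ -c i
    linarith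
  · rintro ⟨i, hi, hle⟩
    have h0 : f x - g x = L i x + c i := hval i x hi
    have hle' : L i x ≤ -c i := hle
    linarith

theorem pUn_eq {f g : E → ℝ} (hf : PLF f) (hg : PLF g) : PUn {x | f x = g x} := by
  have : {x | f x = g x} = {x | f x ≤ g x} ∩ {x | g x ≤ f x} := by
    ext x; simp only [Set.mem_setOf_eq, Set.mem_inter_iff]; constructor
    · intro h; exact ⟨le_of_eq h, le_of_eq h.symm⟩
    · intro h; exact le_antisymm h.1 h.2
  rw [this]
  exact (pUn_le hf hg).inter (pUn_le hg hf)


theorem polyH_iInter' {κ : Type*} [Finite κ] {P : κ → Set E} (h : ∀ i, PolyH (P i)) :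
    PolyH (⋂ i, P i) := by
  obtain ⟨n, ⟨e⟩⟩ := Finite.exists_equiv_fin κ
  have hh : ⋂ i, P i = ⋂ k : Fin n, P (e.symm k) := by
    ext x
    simp only [Set.mem_iInter]
    constructor
    · intro h k; exact h _
    · intro h i
      have := h (e i); rwa [Equiv.symm_apply_apply] at this
  rw [hh]
  exact polyH_iInter fun k => h _

theorem pUn_iInter' {κ : Type*} [Finite κ] {P : κ → Set E} (h : ∀ i, PUn (P i)) :
    PUn (⋂ i, P i) := by
  obtain ⟨n, ⟨e⟩⟩ := Finite.exists_equiv_fin κ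
  have hh : ⋂ i, P i = ⋂ k : Fin n, P (e.symm k) := by
    ext x
    simp only [Set.mem_iInter]
    constructor
    · intro h k; exact h _
    · intro h i
      have := h (e i); rwa [Equiv.symm_apply_apply] at this
  rw [hh]
  exact pUn_iInter fun k => h _

theorem pUn_iInterProp {A : Prop} {B : Set E} (h : A → PUn B) : PUn (⋂ (_ : A), B) := by
  by_cases hA : A
  · have hh : (⋂ (_ : A), B) = B := by ext y; simp [hA]
    rw [hh]; exact h hA
  · have hh : (⋂ (_ : A), B) = Set.univ := by ext y; simp [hA]
    rw [hh]; exact polyH_univ.pUn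

theorem pUn_imp {A : Prop} {B : E → Prop} (h : A → PUn {x | B x}) : PUn {x | A → B x} := by
  by_cases hA : A
  · have hh : {x : E | A → B x} = {x | B x} := by ext x; simp [hA]
    rw [hh]; exact h hA
  · have hh : {x : E | A → B x} = Set.univ := by ext x; simp [hA]
    rw [hh]; exact polyH_univ.pUn

end Poly

section MeasCrit
variable {Ω : Type*} [Finite Ω]

/-- Two points are equivalent for a σ-algebra if no measurable set separates them. -/
def mRel (F : MeasurableSpace Ω) (ω ω' : Ω) : Prop :=
  ∀ A : Set Ω, MeasurableSet[F] A → (ω ∈ A ↔ ω' ∈ A)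

theorem measurable_iff_mRel (F : MeasurableSpace Ω) (g : Ω → ℝ) :
    Measurable[F] g ↔ ∀ ω ω', mRel F ω ω' → g ω = g ω' := by
  constructor
  · intro hg ω ω' hrel
    have hA : MeasurableSet[F] (g ⁻¹' {g ω}) := hg (measurableSet_singleton _)
    have := (hrel _ hA).1 rfl
    exact this.symm
  · intro h
    set C : Ω → Set Ω := fun ω => ⋂ A ∈ {A : Set Ω | MeasurableSet[F] A ∧ ω ∈ A}, A
      with hC
    have hCmeas : ∀ ω, MeasurableSet[F] (C ω) := by
      intro ω
      exact MeasurableSet.biInter (Set.to_countable _) fun A hA => hA.1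
    have hCself : ∀ ω, ω ∈ C ω := by
      intro ω
      exact Set.mem_biInter fun A hA => hA.2
    have hCrel : ∀ ω ω', ω' ∈ C ω → mRel F ω ω' := by
      intro ω ω' hω' A hA
      constructor
      · intro hωA
        exact Set.mem_iInter₂.1 hω' A ⟨hA, hωA⟩
      · intro hω'A
        by_contra hωA
        have : ω' ∈ Aᶜ := Set.mem_iInter₂.1 hω' Aᶜ ⟨hA.compl, hωA⟩
        exact this hω'A
    intro B _
    have key : g ⁻¹' B = ⋃ ω ∈ g ⁻¹' B, C ω := by
      ext ω'
      simp only [Set.mem_preimage, Set.mem_iUnion]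
      constructor
      · intro hω'
        exact ⟨ω', hω', hCself ω'⟩
      · rintro ⟨ω, hω, hω'⟩
        have := h ω ω' (hCrel ω ω' hω')
        rwa [← this]
    rw [key]
    exact MeasurableSet.biUnion (Set.to_countable _) fun ω _ => hCmeas ω

theorem measurable_mRel_pi {d : ℕ} (F : MeasurableSpace Ω) (g : Ω → Fin d → ℝ)
    (h : ∀ ω ω', mRel F ω ω' → g ω = g ω') : Measurable[F] g := by
  refine measurable_pi_lambda _ fun j => ?_
  exact (measurable_iff_mRel F fun ω => g ω j).2 fun ω ω' hrel => by rw [h ω ω' hrel]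

end MeasCrit

/-- Euclidean inner product on `Fin d → ℝ`. -/
def dotp {d : ℕ} (a b : Fin d → ℝ) : ℝ := ∑ j, a j * b j

/-- Euclidean norm on `Fin d → ℝ`. -/
def eucNorm {d : ℕ} (a : Fin d → ℝ) : ℝ := Real.sqrt (∑ j, a j ^ 2)

/-- Accumulated realized gains and losses `G_t`, given the bank account history `eta`:
`G_t = ∑_{u=1}^t ( η_{u-1} r_u + ∑_{i=0}^{u-1} ⟨N_{i,u-1} - N_{i,u}, S_u - S_i⟩ )`. -/
def Gaux {d : ℕ} (S : ℕ → Fin d → ℝ) (r : ℕ → ℝ) (N : ℕ → ℕ → Fin d → ℝ)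
    (eta : ℕ → ℝ) (t : ℕ) : ℝ :=
  ∑ u ∈ Finset.Icc 1 t,
    (eta (u - 1) * r u +
      ∑ i ∈ Finset.range u, dotp (fun j => N i (u - 1) j - N i u j) (fun j => S u j - S i j))

/-- Limited-use-of-losses tax payments `Π_t = α · max_{0 ≤ u ≤ t} G_u`. -/
def Piaux {d : ℕ} (α : ℝ) (S : ℕ → Fin d → ℝ) (r : ℕ → ℝ) (N : ℕ → ℕ → Fin d → ℝ)
    (eta : ℕ → ℝ) (t : ℕ) : ℝ :=
  α * (Finset.range (t + 1)).sup' ⟨t, Finset.mem_range.mpr (Nat.lt_succ_self t)⟩ (fun u => Gaux S r N eta u)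

/-- `etaHist α x S r N t` is the bank-account history after trading and taxes, up to time `t`:
for `s ≤ t` it gives `η_s`, and for `s > t` it gives `η_t`.  It is defined by the
self-financing recursion `η_{-1} = x`,
`η_t - η_{t-1} = r_t η_{t-1} 1_{t ≥ 1} + ⟨∑_{i<t}(N_{i,t-1} - N_{i,t}) - N_{t,t}, S_t⟩
  - (Π_t - Π_{t-1}) 1_{t ≥ 1}`. -/
def etaHist {d : ℕ} (α x : ℝ) (S : ℕ → Fin d → ℝ) (r : ℕ → ℝ)
    (N : ℕ → ℕ → Fin d → ℝ) : ℕ → ℕ → ℝ :=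
  Nat.rec (motive := fun _ => ℕ → ℝ)
    (fun _ => x - dotp (fun j => N 0 0 j) (fun j => S 0 j))
    (fun t e => fun s =>
      if s ≤ t then e s
      else
        e t + r (t + 1) * e t
          + dotp
              (fun j => (∑ i ∈ Finset.range (t + 1), (N i t j - N i (t + 1) j))
                - N (t + 1) (t + 1) j)
              (fun j => S (t + 1) j)
          - (Piaux α S r N e (t + 1) - Piaux α S r N e t))

/-- A discrete-time market with horizon `T`, `d` risky assets, a filtration `F`,
adapted nonnegative-price processes are not required in general, and a nonnegative adapted
interest-rate process `r`. -/
structure Market (Ω : Type*) [m0 : MeasurableSpace Ω] (T d : ℕ) where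
  P : Measure Ω
  hProb : IsProbabilityMeasure P
  F : ℕ → MeasurableSpace Ω
  F_le : ∀ t, F t ≤ m0
  F_mono : Monotone F
  S : ℕ → Ω → Fin d → ℝ
  S_adapted : ∀ t, Measurable[F t] (S t)
  r : ℕ → Ω → ℝ
  r_nonneg : ∀ t ω, 0 ≤ r t ω
  r_adapted : ∀ t, Measurable[F t] (r t)

variable {Ω : Type*} [m0 : MeasurableSpace Ω] {T d : ℕ}

/-- A trading strategy: `N i t ω j` is the number of shares of asset `j` bought at time `i`
and still held after trading at time `t`.  It is `F t`-adapted, nonnegative, nonincreasing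
in `t` (for `i ≤ t < T`), forced to liquidate at `T`, and zero before the purchase date. -/
def Market.IsStrategy (M : Market Ω T d) (N : ℕ → ℕ → Ω → Fin d → ℝ) : Prop :=
  (∀ i t, Measurable[M.F t] (N i t)) ∧
  (∀ i t ω j, 0 ≤ N i t ω j) ∧
  (∀ i t, i ≤ t → t < T → ∀ ω j, N i (t + 1) ω j ≤ N i t ω j) ∧
  (∀ i ω j, N i T ω j = 0) ∧
  (∀ i t, t < i → ∀ ω j, N i t ω j = 0)

/-- After-tax terminal wealth `V^α(x,N) = η_T`. -/
def Market.V (M : Market Ω T d) (α x : ℝ) (N : ℕ → ℕ → Ω → Fin d → ℝ) (ω : Ω) : ℝ :=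
  etaHist α x (fun t => M.S t ω) (fun t => M.r t ω) (fun i t => N i t ω) T T

/-- The frictionless (tax-free) wealth process `V^0_t(x,N) = η_t + ⟨∑_{i≤t} N_{i,t}, S_t⟩`,
where `η` is the bank account for tax rate `0`. -/
def Market.V0proc (M : Market Ω T d) (x : ℝ) (N : ℕ → ℕ → Ω → Fin d → ℝ) (t : ℕ) (ω : Ω) : ℝ :=
  etaHist 0 x (fun u => M.S u ω) (fun u => M.r u ω) (fun i u => N i u ω) t t
    + dotp (fun j => ∑ i ∈ Finset.range (t + 1), N i t ω j) (fun j => M.S t ω j)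

/-- The no-arbitrage condition for tax rate `α`. -/
def Market.NA (M : Market Ω T d) (α : ℝ) : Prop :=
  ∀ N, M.IsStrategy N → (∀ᵐ ω ∂M.P, 0 ≤ M.V α 0 N ω) → ∀ᵐ ω ∂M.P, M.V α 0 N ω = 0

/-- The set `{V^α(x,N) : N ∈ 𝒩} - L^0(F_T; ℝ₊)` of attainable after-tax terminal wealths. -/
def Market.Vset (M : Market Ω T d) (α x : ℝ) : Set (Ω → ℝ) :=
  {f | ∃ N, M.IsStrategy N ∧
    ∃ g : Ω → ℝ, Measurable[M.F T] g ∧ (∀ ω, 0 ≤ g ω) ∧ f = fun ω => M.V α x N ω - g ω}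

/-- The frictionless wealth recursion
`V_t = (1+r_t) V_{t-1} + ⟨∑_{i<t} N_{i,t-1}, S_t - (1+r_t) S_{t-1}⟩`. -/
def wealth0 {d : ℕ} (S : ℕ → Fin d → ℝ) (r : ℕ → ℝ) (N : ℕ → ℕ → Fin d → ℝ) (x : ℝ) :
    ℕ → ℝ :=
  Nat.rec (motive := fun _ => ℝ) x (fun t W =>
    (1 + r (t + 1)) * W
      + dotp (fun j => ∑ i ∈ Finset.range (t + 1), N i t j)
          (fun j => S (t + 1) j - (1 + r (t + 1)) * S t j))

/-- Frictionless terminal wealth `V^0(x,N)`. -/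
def Market.V0 (M : Market Ω T d) (x : ℝ) (N : ℕ → ℕ → Ω → Fin d → ℝ) (ω : Ω) : ℝ :=
  wealth0 (fun t => M.S t ω) (fun t => M.r t ω) (fun i t => N i t ω) x T

/-- No-arbitrage for the frictionless model. -/
def Market.NA0 (M : Market Ω T d) : Prop :=
  ∀ N, M.IsStrategy N → (∀ᵐ ω ∂M.P, 0 ≤ M.V0 0 N ω) → ∀ᵐ ω ∂M.P, M.V0 0 N ω = 0

/-- The cone `ℛ_t` of reversible one-period strategies. -/
def Market.RevCone (M : Market Ω T d) (t : ℕ) : Set (Ω → Fin d → ℝ) :=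
  {β | Measurable[M.F t] β ∧ (∀ ω j, 0 ≤ β ω j) ∧
    ∀ᵐ ω ∂M.P, dotp (β ω) (fun j => M.S (t + 1) ω j - (1 + M.r (t + 1) ω) * M.S t ω j) = 0}

/-- `q` is the purely nonreversible part `q_t(β)` of `β`: it is `F_t`-measurable, nonnegative,
`β - q` is reversible, and `q` has minimal Euclidean norm among all such decompositions. -/
def Market.IsQ (M : Market Ω T d) (t : ℕ) (β q : Ω → Fin d → ℝ) : Prop :=
  Measurable[M.F t] q ∧ (∀ ω j, 0 ≤ q ω j) ∧
  (fun ω j => β ω j - q ω j) ∈ M.RevCone t ∧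
  ∀ q' : Ω → Fin d → ℝ, Measurable[M.F t] q' → (∀ ω j, 0 ≤ q' ω j) →
    (fun ω j => β ω j - q' ω j) ∈ M.RevCone t →
    ∀ᵐ ω ∂M.P, eucNorm (q ω) ≤ eucNorm (q' ω)

/-- `β` is purely nonreversible, i.e. `q_t(β) = β`. -/
def Market.PurelyNonRev (M : Market Ω T d) (t : ℕ) (β : Ω → Fin d → ℝ) : Prop :=
  M.IsQ t β β

/-- A reaction function: `R ω a i t` may depend on `ω` only through `F_t` and on the action
history `a` only through the actions up to time `t`; it is nonnegative, nonincreasing in `t`,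
vanishes at and after the horizon `T` and before the purchase date. -/
structure ReactionFun (M : Market Ω T d) where
  R : Ω → (ℕ → ℕ → Fin d → ℝ) → ℕ → ℕ → Fin d → ℝ
  nonneg : ∀ ω a i t j, 0 ≤ R ω a i t j
  adapted_actions : ∀ ω a a' i t, (∀ i' t', t' ≤ t → a i' t' = a' i' t') →
    R ω a i t = R ω a' i t
  meas : ∀ i t, Measurable[(M.F t).prod inferInstance]
    (fun p : Ω × (ℕ → ℕ → Fin d → ℝ) => R p.1 p.2 i t)
  antitone : ∀ ω a i t, i ≤ t → t + 2 ≤ T → ∀ j, R ω a i (t + 1) j ≤ R ω a i t j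
  upper : ∀ ω a i t, T ≤ t → ∀ j, R ω a i t j = 0
  lower : ∀ ω a i t, t < i → ∀ j, R ω a i t j = 0

/-- The strategy `R(N)` produced by a reaction function from a strategy `N`. -/
def ReactionFun.apply {M : Market Ω T d} (Rf : ReactionFun M)
    (N : ℕ → ℕ → Ω → Fin d → ℝ) : ℕ → ℕ → Ω → Fin d → ℝ :=
  fun i t ω => Rf.R ω (fun i' t' => N i' t' ω) i t

/-- `max_{i=0,…,T-1, j=1,…,d} N_{i,i,j}`. -/
def stratMax {Ω : Type*} {d : ℕ} (T : ℕ) (N : ℕ → ℕ → Ω → Fin d → ℝ) (ω : Ω) : ℝ :=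
  ⨆ i ∈ Finset.range T, ⨆ j : Fin d, N i i ω j

/-- A family of random variables is bounded in `L⁰` (bounded in probability). -/
def BoundedInL0 {Ω : Type*} [MeasurableSpace Ω] (P : Measure Ω) (𝒮 : Set (Ω → ℝ)) : Prop :=
  ∀ ε : ℝ, 0 < ε → ∃ C : ℝ, ∀ f ∈ 𝒮, P {ω | C < |f ω|} ≤ ENNReal.ofReal ε

/-- The "no unbounded non-substitutable investment with bounded risk" condition. -/
def Market.NUIBR (M : Market Ω T d) (α : ℝ) : Prop :=
  ∀ x : ℝ, ∃ Rf : ReactionFun M,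
    (∀ N, M.IsStrategy N → M.IsStrategy (Rf.apply N)) ∧
    (∀ N, M.IsStrategy N → ∀ᵐ ω ∂M.P, M.V α x N ω ≤ M.V α x (Rf.apply N) ω) ∧
    ∀ K : ℝ, 0 ≤ K →
      BoundedInL0 M.P (convexHull ℝ
        {f : Ω → ℝ | ∃ N, M.IsStrategy N ∧ (∀ᵐ ω ∂M.P, -K ≤ M.V α x N ω) ∧
          f = stratMax T (Rf.apply N)})

/-- A set of random variables is closed with respect to convergence in probability
(as a subset of `L⁰`, i.e. up to almost-sure equality). -/
def ClosedInProbability {Ω : Type*} [MeasurableSpace Ω] (P : Measure Ω)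
    (𝒮 : Set (Ω → ℝ)) : Prop :=
  ∀ (f : ℕ → Ω → ℝ) (g : Ω → ℝ), (∀ n, f n ∈ 𝒮) →
    TendstoInMeasure P f Filter.atTop g → ∃ g' ∈ 𝒮, g' =ᵐ[P] g


/-- Bank account process for an artificial linear tax rule `τ`:
taxes `Π^{(τ)}_t = α · G_{τ_t}` are paid according to the rule `τ` (with `τ 0 = 0`,
so that `Π^{(τ)}_0 = 0`).  `etaTau α x S r N τ t s` gives `η^{(τ)}_s` for `s ≤ t`. -/
def etaTau {d : ℕ} (α x : ℝ) (S : ℕ → Fin d → ℝ) (r : ℕ → ℝ)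
    (N : ℕ → ℕ → Fin d → ℝ) (τ : ℕ → ℕ) : ℕ → ℕ → ℝ :=
  Nat.rec (motive := fun _ => ℕ → ℝ)
    (fun _ => x - dotp (fun j => N 0 0 j) (fun j => S 0 j))
    (fun t e => fun s =>
      if s ≤ t then e s
      else
        e t + r (t + 1) * e t
          + dotp
              (fun j => (∑ i ∈ Finset.range (t + 1), (N i t j - N i (t + 1) j))
                - N (t + 1) (t + 1) j)
              (fun j => S (t + 1) j)
          - (α * Gaux S r N e (τ (t + 1)) - α * Gaux S r N e (τ t)))

variable {Ω : Type*} [m0 : MeasurableSpace Ω] {T d : ℕ}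

/-- An artificial linear tax rule: an adapted `{0,…,T}`-valued process `τ` with `τ_0 = 0`,
`τ` nondecreasing in `t`, `τ_t ≤ t`, and `τ_{τ_t} = τ_t` whenever `τ_t ≥ 1`. -/
def Market.IsTaxRule (M : Market Ω T d) (τ : ℕ → Ω → ℕ) : Prop :=
  (∀ ω, τ 0 ω = 0) ∧
  (∀ t, Measurable[M.F t] (τ t)) ∧
  (∀ t ω, τ t ω ≤ t) ∧
  (∀ t ω, τ t ω ≤ T) ∧
  (∀ s t, s ≤ t → ∀ ω, τ s ω ≤ τ t ω) ∧
  (∀ t ω, 1 ≤ τ t ω → τ (τ t ω) ω = τ t ω)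

/-- Terminal bank account `η^{(τ)}_T(N)` under the artificial tax rule `τ`. -/
def Market.etaTauT (M : Market Ω T d) (α x : ℝ) (N : ℕ → ℕ → Ω → Fin d → ℝ)
    (τ : ℕ → Ω → ℕ) (ω : Ω) : ℝ :=
  etaTau α x (fun t => M.S t ω) (fun t => M.r t ω) (fun i t => N i t ω) (fun t => τ t ω) T T

/-- A strategy realizes losses: it does not keep shares that trade below their purchase
price. -/
def Market.RealizesLosses (M : Market Ω T d) (N : ℕ → ℕ → Ω → Fin d → ℝ) : Prop :=
  ∀ i t j, i < t → t ≤ T → ∀ᵐ ω ∂M.P, M.S t ω j < M.S i ω j → N i t ω j = 0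

/-- The loss bound `L_t(N) = ((−x) ∨ 0 + ∑_{s<t} ⟨q_s(∑_{i≤s} N_{i,s}), S_s⟩)(1+r̄)^T`,
expressed through a given family `q s` of purely nonreversible parts. -/
def Lfun {Ω : Type*} {d : ℕ} (x rbar : ℝ) (T : ℕ) (S : ℕ → Ω → Fin d → ℝ)
    (q : ℕ → Ω → Fin d → ℝ) (t : ℕ) (ω : Ω) : ℝ :=
  (max (-x) 0 + ∑ s ∈ Finset.range t, dotp (q s ω) (fun j => S s ω j)) * (1 + rbar) ^ T

/-- A stopping time of the filtration `F`. -/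
def IsStoppingTimeFun {Ω : Type*} (F : ℕ → MeasurableSpace Ω) (τ : Ω → ℕ) : Prop :=
  ∀ t : ℕ, MeasurableSet[F t] {ω | τ ω ≤ t}

/-- The family of random variables over which the essential infimum defining `ε_t` is
taken. -/
def Market.epsFamily (M : Market Ω T d) (t : ℕ) : Set (Ω → ENNReal) :=
  {g | ∃ (ε : Ω → ℝ) (A : Set Ω) (N : ℕ → ℕ → Ω → Fin d → ℝ),
    Measurable[M.F t] ε ∧ (∀ ω, ε ω ∈ Set.Icc (0:ℝ) 1) ∧
    MeasurableSet[M.F t] A ∧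
    M.IsStrategy N ∧ (∀ i, i < t → ∀ ω j, N i i ω j = 0) ∧
    M.PurelyNonRev t (fun ω => N t t ω) ∧
    (∀ᵐ ω ∂M.P, eucNorm (N t t ω) = Set.indicator A (fun _ => (1:ℝ)) ω) ∧
    (∀ᵐ ω ∂M.P,
      (M.P[Set.indicator {ω' | M.V0 0 N ω' ≤ - ε ω'} (fun _ => (1:ℝ)) | M.F t]) ω ≤ ε ω) ∧
    g = fun ω => if ω ∈ A then ENNReal.ofReal (ε ω) else (⊤ : ENNReal)}

/-- `e` is the essential infimum of the family `𝒮` of `[0,∞]`-valued random variables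
(with respect to `P`, measurable with respect to `m'`). -/
def IsEssInfOfSet {Ω : Type*} [MeasurableSpace Ω] (m' : MeasurableSpace Ω) (P : Measure Ω)
    (𝒮 : Set (Ω → ENNReal)) (e : Ω → ENNReal) : Prop :=
  Measurable[m'] e ∧ (∀ g ∈ 𝒮, ∀ᵐ ω ∂P, e ω ≤ g ω) ∧
  ∀ e' : Ω → ENNReal, Measurable[m'] e' → (∀ g ∈ 𝒮, ∀ᵐ ω ∂P, e' ω ≤ g ω) →
    ∀ᵐ ω ∂P, e' ω ≤ e ω

/-- The positive part of an extended-real number, as an element of `[0,∞]`. -/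
def erealPos (y : EReal) : ENNReal := if y = ⊤ then ⊤ else ENNReal.ofReal y.toReal

/-- A utility function: `U = -∞` on the negative half-line, real-valued, nondecreasing and
concave on the positive half-line (with real restriction `u`), and continuous from the
right at `0`. -/
structure UtilityFun where
  U : ℝ → EReal
  u : ℝ → ℝ
  neg_bot : ∀ y : ℝ, y < 0 → U y = ⊥
  pos_real : ∀ y : ℝ, 0 < y → U y = (u y : EReal)
  mono : MonotoneOn u (Set.Ioi (0:ℝ))
  concave : ConcaveOn ℝ (Set.Ioi (0:ℝ)) u
  zero_lim : Filter.Tendsto U (nhdsWithin 0 (Set.Ioi (0:ℝ))) (nhds (U 0))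

/-- Expected utility `E[U(X)] = E[U⁺(X)] - E[U⁻(X)]`, with the convention that it equals
`-∞` whenever `E[U⁻(X)] = ∞`. -/
def expUtility {Ω : Type*} [MeasurableSpace Ω] (P : Measure Ω) (Uf : UtilityFun)
    (X : Ω → ℝ) : EReal :=
  if (∫⁻ ω, erealPos (-(Uf.U (X ω))) ∂P) = ⊤ then ⊥
  else ((∫⁻ ω, erealPos (Uf.U (X ω)) ∂P : ENNReal) : EReal)
    - ((∫⁻ ω, erealPos (-(Uf.U (X ω))) ∂P : ENNReal) : EReal)

/-- The value function `u^α(x) = sup_{N ∈ 𝒜^α(x)} E[U(V^α(x,N))]` of the utility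
maximization problem with taxes. -/
def Market.valueFn (M : Market Ω T d) (Uf : UtilityFun) (α x : ℝ) : EReal :=
  ⨆ N ∈ {N : ℕ → ℕ → Ω → Fin d → ℝ |
      M.IsStrategy N ∧ ∀ᵐ ω ∂M.P, 0 ≤ M.V α x N ω},
    expUtility M.P Uf (fun ω => M.V α x N ω)

/-- The value function `u^0(x)` of the frictionless utility maximization problem. -/
def Market.valueFn0 (M : Market Ω T d) (Uf : UtilityFun) (x : ℝ) : EReal :=
  ⨆ N ∈ {N : ℕ → ℕ → Ω → Fin d → ℝ |
      M.IsStrategy N ∧ ∀ᵐ ω ∂M.P, 0 ≤ M.V0 x N ω},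
    expUtility M.P Uf (fun ω => M.V0 x N ω)

/-- The set `{V^α(x,N) : N ∈ 𝒜^α(x)} - L^0(F_T; ℝ₊)`. -/
def Market.VsetNonneg (M : Market Ω T d) (α x : ℝ) : Set (Ω → ℝ) :=
  {f | ∃ N, M.IsStrategy N ∧ (∀ᵐ ω ∂M.P, 0 ≤ M.V α x N ω) ∧
    ∃ g : Ω → ℝ, Measurable[M.F T] g ∧ (∀ ω, 0 ≤ g ω) ∧ f = fun ω => M.V α x N ω - g ω}

/-- The set `{V^0(x,N) : N ∈ 𝒩} - L^0(F_T; ℝ₊)` for the frictionless model. -/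
def Market.V0set (M : Market Ω T d) (x : ℝ) : Set (Ω → ℝ) :=
  {f | ∃ N, M.IsStrategy N ∧
    ∃ g : Ω → ℝ, Measurable[M.F T] g ∧ (∀ ω, 0 ≤ g ω) ∧ f = fun ω => M.V0 x N ω - g ω}

/-- A measurable (set-valued) random set: preimages of open sets are measurable. -/
def MeasRandomSet {Ω : Type*} (m : MeasurableSpace Ω) {d : ℕ}
    (K : Ω → Set (Fin d → ℝ)) : Prop :=
  ∀ O : Set (Fin d → ℝ), IsOpen O → MeasurableSet[m] {ω | (K ω ∩ O).Nonempty}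

/-- The random set `A_t = {β ∈ 𝒫_t : 1 + r_{t+1} + ⟨β, S_{t+1} - (1+r_{t+1})S_t⟩ ≥ 0 a.s.}`. -/
def Market.AtSet (M : Market Ω T d) (t : ℕ) : Set (Ω → Fin d → ℝ) :=
  {β | M.PurelyNonRev t β ∧
    ∀ᵐ ω ∂M.P, 0 ≤ 1 + M.r (t + 1) ω
      + dotp (β ω) (fun j => M.S (t + 1) ω j - (1 + M.r (t + 1) ω) * M.S t ω j)}


section MarketPLF
variable {E : Type*} [AddCommGroup E] [Module ℝ E]
variable {d : ℕ}

theorem etaHist_zero (α x : ℝ) (S : ℕ → Fin d → ℝ) (r : ℕ → ℝ)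
    (N : ℕ → ℕ → Fin d → ℝ) (s : ℕ) :
    etaHist α x S r N 0 s = x - dotp (fun j => N 0 0 j) (fun j => S 0 j) := rfl

theorem etaHist_succ (α x : ℝ) (S : ℕ → Fin d → ℝ) (r : ℕ → ℝ)
    (N : ℕ → ℕ → Fin d → ℝ) (t s : ℕ) :
    etaHist α x S r N (t + 1) s =
      if s ≤ t then etaHist α x S r N t s
      else
        etaHist α x S r N t t + r (t + 1) * etaHist α x S r N t t
          + dotp (fun j => (∑ i ∈ Finset.range (t + 1), (N i t j - N i (t + 1) j))
              - N (t + 1) (t + 1) j) (fun j => S (t + 1) j)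
          - (Piaux α S r N (etaHist α x S r N t) (t + 1)
              - Piaux α S r N (etaHist α x S r N t) t) := rfl

theorem plf_dotp (b : Fin d → ℝ) {A : E → Fin d → ℝ} (hA : ∀ j, PLF (fun v => A v j)) :
    PLF (fun v => dotp (A v) b) := by
  show PLF (fun v => ∑ j, A v j * b j)
  refine PLF.finset_sum Finset.univ (fun j v => A v j * b j) fun j _ => ?_
  have := (hA j).smul (b j)
  simpa [mul_comm] using this

theorem plf_Gaux (S : ℕ → Fin d → ℝ) (r : ℕ → ℝ) {𝒩 : E → ℕ → ℕ → Fin d → ℝ}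
    (h𝒩 : ∀ i t j, PLF (fun v => 𝒩 v i t j)) {e : E → ℕ → ℝ}
    (he : ∀ s, PLF (fun v => e v s)) (t : ℕ) :
    PLF (fun v => Gaux S r (𝒩 v) (e v) t) := by
  show PLF (fun v => ∑ u ∈ Finset.Icc 1 t,
    (e v (u - 1) * r u + ∑ i ∈ Finset.range u,
      dotp (fun j => 𝒩 v i (u - 1) j - 𝒩 v i u j) (fun j => S u j - S i j)))
  refine PLF.finset_sum _ _ fun u _ => ?_
  refine PLF.add ?_ ?_
  · have := (he (u - 1)).smul (r u)
    simpa [mul_comm] using this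
  · refine PLF.finset_sum _ _ fun i _ => ?_
    exact plf_dotp _ fun j => (h𝒩 i (u - 1) j).sub (h𝒩 i u j)

theorem plf_Piaux (α : ℝ) (S : ℕ → Fin d → ℝ) (r : ℕ → ℝ) {𝒩 : E → ℕ → ℕ → Fin d → ℝ}
    (h𝒩 : ∀ i t j, PLF (fun v => 𝒩 v i t j)) {e : E → ℕ → ℝ}
    (he : ∀ s, PLF (fun v => e v s)) (t : ℕ) :
    PLF (fun v => Piaux α S r (𝒩 v) (e v) t) := by
  show PLF (fun v => α * (Finset.range (t + 1)).sup' ⟨t, Finset.mem_range.mpr (Nat.lt_succ_self t)⟩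
    (fun u => Gaux S r (𝒩 v) (e v) u))
  exact (PLF.finset_sup' _ ⟨t, Finset.mem_range.mpr (Nat.lt_succ_self t)⟩
    (fun u v => Gaux S r (𝒩 v) (e v) u)
    (fun u _ => plf_Gaux S r h𝒩 he u)).smul α

theorem plf_etaHist (α x : ℝ) (S : ℕ → Fin d → ℝ) (r : ℕ → ℝ)
    {𝒩 : E → ℕ → ℕ → Fin d → ℝ} (h𝒩 : ∀ i t j, PLF (fun v => 𝒩 v i t j)) :
    ∀ t s, PLF (fun v => etaHist α x S r (𝒩 v) t s) := by
  intro t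
  induction t with
  | zero =>
    intro s
    simp only [etaHist_zero]
    exact (PLF.const x).sub (plf_dotp _ fun j => h𝒩 0 0 j)
  | succ t ih =>
    intro s
    simp only [etaHist_succ]
    by_cases hst : s ≤ t
    · simpa [if_pos hst] using ih s
    · simp only [if_neg hst]
      refine PLF.sub (PLF.add (PLF.add (ih t) ?_) ?_) (PLF.sub ?_ ?_)
      · have := (ih t).smul (r (t + 1))
        exact this
      · refine plf_dotp _ fun j => ?_
        refine PLF.sub (PLF.finset_sum _ _ fun i _ => ?_) (h𝒩 (t + 1) (t + 1) j)
        exact (h𝒩 i t j).sub (h𝒩 i (t + 1) j)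
      · exact plf_Piaux α S r h𝒩 ih (t + 1)
      · exact plf_Piaux α S r h𝒩 ih t

theorem Gaux_congr {T : ℕ} (S : ℕ → Fin d → ℝ) (r : ℕ → ℝ)
    {N N' : ℕ → ℕ → Fin d → ℝ}
    (h : ∀ i t, i ≤ T → t ≤ T → ∀ j, N i t j = N' i t j) (e : ℕ → ℝ) {t : ℕ}
    (ht : t ≤ T) : Gaux S r N e t = Gaux S r N' e t := by
  unfold Gaux
  refine Finset.sum_congr rfl fun u hu => ?_
  rw [Finset.mem_Icc] at hu
  congr 1
  refine Finset.sum_congr rfl fun i hi => ?_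
  rw [Finset.mem_range] at hi
  unfold dotp
  refine Finset.sum_congr rfl fun j _ => ?_
  beta_reduce
  rw [h i (u - 1) (by omega) (by omega) j, h i u (by omega) (by omega) j]

theorem Piaux_congr {T : ℕ} (α : ℝ) (S : ℕ → Fin d → ℝ) (r : ℕ → ℝ)
    {N N' : ℕ → ℕ → Fin d → ℝ}
    (h : ∀ i t, i ≤ T → t ≤ T → ∀ j, N i t j = N' i t j) (e : ℕ → ℝ) {t : ℕ}
    (ht : t ≤ T) : Piaux α S r N e t = Piaux α S r N' e t := by
  unfold Piaux
  congr 1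
  refine Finset.sup'_congr _ rfl fun u hu => ?_
  rw [Finset.mem_range] at hu
  exact Gaux_congr S r h e (by omega)

theorem etaHist_congr {T : ℕ} (α x : ℝ) (S : ℕ → Fin d → ℝ) (r : ℕ → ℝ)
    {N N' : ℕ → ℕ → Fin d → ℝ}
    (h : ∀ i t, i ≤ T → t ≤ T → ∀ j, N i t j = N' i t j) :
    ∀ t, t ≤ T → ∀ s, etaHist α x S r N t s = etaHist α x S r N' t s := by
  intro t
  induction t with
  | zero =>
    intro _ s
    rw [etaHist_zero, etaHist_zero]
    unfold dotp
    congr 1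
    exact Finset.sum_congr rfl fun j _ => by
      beta_reduce
      rw [h 0 0 (by omega) (by omega) j]
  | succ t ih =>
    intro hT s
    have hT' : t ≤ T := by omega
    rw [etaHist_succ, etaHist_succ]
    by_cases hst : s ≤ t
    · rw [if_pos hst, if_pos hst, ih hT' s]
    · rw [if_neg hst, if_neg hst]
      have hfun : etaHist α x S r N t = etaHist α x S r N' t := funext (ih hT')
      have hdot : dotp (fun j => (∑ i ∈ Finset.range (t + 1), (N i t j - N i (t + 1) j))
            - N (t + 1) (t + 1) j) (fun j => S (t + 1) j)
          = dotp (fun j => (∑ i ∈ Finset.range (t + 1), (N' i t j - N' i (t + 1) j))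
            - N' (t + 1) (t + 1) j) (fun j => S (t + 1) j) := by
        unfold dotp
        refine Finset.sum_congr rfl fun j _ => ?_
        beta_reduce
        rw [h (t + 1) (t + 1) (by omega) (by omega) j]
        congr 2
        exact Finset.sum_congr rfl fun i hi => by
          rw [Finset.mem_range] at hi
          rw [h i t (by omega) hT' j, h i (t + 1) (by omega) hT j]
      rw [hfun, hdot,
        Piaux_congr α S r h (etaHist α x S r N' t) hT,
        Piaux_congr α S r h (etaHist α x S r N' t) hT']

end MarketPLF


section Assembly

/-- Index type for the auxiliary variables: strategy entries and the subtracted payoff. -/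
abbrev vsIdx (Ω : Type*) (T d : ℕ) := (Fin (T + 1) × Fin (T + 1) × Ω × Fin d) ⊕ Ω

/-- Ambient product space: auxiliary variables paired with the terminal wealth profile. -/
abbrev vsX (Ω : Type*) (T d : ℕ) := (vsIdx Ω T d → ℝ) × (Ω → ℝ)

/-- Reading a strategy entry out of the variable vector (with truncation outside `[0,T]`). -/
def vsNv {Ω : Type*} (T d : ℕ) (p : vsX Ω T d) (i t : ℕ) (ω : Ω) (j : Fin d) : ℝ :=
  if h : i ≤ T ∧ t ≤ T then p.1 (Sum.inl (⟨i, by omega⟩, ⟨t, by omega⟩, ω, j)) else 0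

theorem plf_vsNv {Ω : Type*} (T d : ℕ) (i t : ℕ) (ω : Ω) (j : Fin d) :
    PLF (fun p : vsX Ω T d => vsNv T d p i t ω j) := by
  by_cases h : i ≤ T ∧ t ≤ T
  · obtain ⟨h1, h2⟩ := h
    have hh : (fun p : vsX Ω T d => vsNv T d p i t ω j)
        = fun p : vsX Ω T d =>
            ((LinearMap.proj (Sum.inl (⟨i, by omega⟩, ⟨t, by omega⟩, ω, j)) :
              (vsIdx Ω T d → ℝ) →ₗ[ℝ] ℝ).comp (LinearMap.fst ℝ _ _)) p := by
      funext p
      unfold vsNv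
      rw [dif_pos ⟨h1, h2⟩]
      rfl
    rw [hh]
    exact PLF.linear _
  · have hh : (fun p : vsX Ω T d => vsNv T d p i t ω j) = fun _ => (0 : ℝ) := by
      funext p
      unfold vsNv
      rw [dif_neg h]
    rw [hh]
    exact PLF.const 0

/-- The constraint set whose projection is `M.Vset α x`. -/
def vsK {Ω : Type*} [m0 : MeasurableSpace Ω] {T d : ℕ} (M : Market Ω T d) (α x : ℝ) :
    Set (vsX Ω T d) :=
  {p | (∀ (i t : Fin (T + 1)) (ω : Ω) (j : Fin d), 0 ≤ vsNv T d p i t ω j) ∧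
       (∀ (i t : Fin (T + 1)) (ω : Ω) (j : Fin d), (i : ℕ) ≤ (t : ℕ) → (t : ℕ) < T →
          vsNv T d p i ((t : ℕ) + 1) ω j ≤ vsNv T d p i t ω j) ∧
       (∀ (i : Fin (T + 1)) (ω : Ω) (j : Fin d), vsNv T d p i T ω j = 0) ∧
       (∀ (i t : Fin (T + 1)) (ω : Ω) (j : Fin d), (t : ℕ) < (i : ℕ) →
          vsNv T d p i t ω j = 0) ∧
       (∀ (i t : Fin (T + 1)) (j : Fin d) (ω ω' : Ω), mRel (M.F t) ω ω' →
          vsNv T d p i t ω j = vsNv T d p i t ω' j) ∧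
       (∀ ω : Ω, 0 ≤ p.1 (Sum.inr ω)) ∧
       (∀ ω ω' : Ω, mRel (M.F T) ω ω' → p.1 (Sum.inr ω) = p.1 (Sum.inr ω')) ∧
       (∀ ω : Ω, p.2 ω =
          etaHist α x (fun u => M.S u ω) (fun u => M.r u ω)
            (fun i t => vsNv T d p i t ω) T T - p.1 (Sum.inr ω))}

theorem pUn_vsK {Ω : Type*} [m0 : MeasurableSpace Ω] [Fintype Ω] {T d : ℕ}
    (M : Market Ω T d) (α x : ℝ) : PUn (vsK M α x) := by
  classical
  simp only [vsK, Set.setOf_and, Set.setOf_forall]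
  refine PUn.inter (pUn_iInter' fun i => pUn_iInter' fun t => pUn_iInter' fun ω =>
    pUn_iInter' fun j => ?_) (PUn.inter (pUn_iInter' fun i => pUn_iInter' fun t =>
    pUn_iInter' fun ω => pUn_iInter' fun j => ?_) (PUn.inter (pUn_iInter' fun i =>
    pUn_iInter' fun ω => pUn_iInter' fun j => ?_) (PUn.inter (pUn_iInter' fun i =>
    pUn_iInter' fun t => pUn_iInter' fun ω => pUn_iInter' fun j => ?_)
    (PUn.inter (pUn_iInter' fun i => pUn_iInter' fun t => pUn_iInter' fun j =>
    pUn_iInter' fun ω => pUn_iInter' fun ω' => ?_) (PUn.inter (pUn_iInter' fun ω => ?_)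
    (PUn.inter (pUn_iInter' fun ω => pUn_iInter' fun ω' => ?_)
    (pUn_iInter' fun ω => ?_)))))))
  · exact pUn_le (PLF.const 0) (plf_vsNv T d i t ω j)
  · exact pUn_iInterProp fun _ => pUn_iInterProp fun _ =>
      pUn_le (plf_vsNv T d i ((t : ℕ) + 1) ω j) (plf_vsNv T d i t ω j)
  · exact pUn_eq (plf_vsNv T d i T ω j) (PLF.const 0)
  · exact pUn_iInterProp fun _ => pUn_eq (plf_vsNv T d i t ω j) (PLF.const 0)
  · exact pUn_iInterProp fun _ => pUn_eq (plf_vsNv T d i t ω j) (plf_vsNv T d i t ω' j)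
  · exact pUn_le (PLF.const 0)
      (by have := PLF.linear ((LinearMap.proj (R := ℝ) (φ := fun _ : vsIdx Ω T d => ℝ) (Sum.inr ω)).comp (LinearMap.fst ℝ (vsIdx Ω T d → ℝ) (Ω → ℝ))); exact this)
  · exact pUn_iInterProp fun _ => pUn_eq
      (by have := PLF.linear ((LinearMap.proj (R := ℝ) (φ := fun _ : vsIdx Ω T d => ℝ) (Sum.inr ω)).comp (LinearMap.fst ℝ (vsIdx Ω T d → ℝ) (Ω → ℝ))); exact this)
      (by have := PLF.linear ((LinearMap.proj (R := ℝ) (φ := fun _ : vsIdx Ω T d => ℝ) (Sum.inr ω')).comp (LinearMap.fst ℝ (vsIdx Ω T d → ℝ) (Ω → ℝ))); exact this)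
  · refine pUn_eq (by have := PLF.linear ((LinearMap.proj (R := ℝ) (φ := fun _ : Ω => ℝ) ω).comp (LinearMap.snd ℝ (vsIdx Ω T d → ℝ) (Ω → ℝ))); exact this) ?_
    refine PLF.sub ?_
      (by have := PLF.linear ((LinearMap.proj (R := ℝ) (φ := fun _ : vsIdx Ω T d => ℝ) (Sum.inr ω)).comp (LinearMap.fst ℝ (vsIdx Ω T d → ℝ) (Ω → ℝ))); exact this)
    exact plf_etaHist α x (fun u => M.S u ω) (fun u => M.r u ω)
      (𝒩 := fun p i t => vsNv T d p i t ω) (fun i t j => plf_vsNv T d i t ω j) T T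

theorem vsK_eq {Ω : Type*} [m0 : MeasurableSpace Ω] [Fintype Ω] {T d : ℕ}
    (M : Market Ω T d) (α x : ℝ) : M.Vset α x = Prod.snd '' vsK M α x := by
  classical
  ext f
  constructor
  · rintro ⟨N, ⟨hmeas, hpos, hmono, hterm, hlow⟩, g, hgmeas, hgpos, rfl⟩
    set v : vsIdx Ω T d → ℝ :=
      Sum.elim (fun q => N q.1 q.2.1 q.2.2.1 q.2.2.2) g with hv
    set p : vsX Ω T d := (v, fun ω => M.V α x N ω - g ω) with hpdef
    have hval : ∀ (i t : ℕ), i ≤ T → t ≤ T → ∀ (ω : Ω) (j : Fin d),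
        vsNv T d p i t ω j = N i t ω j := by
      intro i t hi ht ω j
      unfold vsNv
      rw [dif_pos ⟨hi, ht⟩]
      rfl
    refine ⟨p, ⟨?_, ?_, ?_, ?_, ?_, ?_, ?_, ?_⟩, rfl⟩
    · intro i t ω j
      rw [hval i t (by omega) (by omega)]
      exact hpos i t ω j
    · intro i t ω j hit htT
      rw [hval i ((t : ℕ) + 1) (by omega) (by omega), hval i t (by omega) (by omega)]
      exact hmono i t hit htT ω j
    · intro i ω j
      rw [hval i T (by omega) (by omega)]
      exact hterm i ω j
    · intro i t ω j hti
      rw [hval i t (by omega) (by omega)]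
      exact hlow i t hti ω j
    · intro i t j ω ω' hrel
      rw [hval i t (by omega) (by omega), hval i t (by omega) (by omega)]
      exact (measurable_iff_mRel (M.F t) (fun ω => N i t ω j)).1
        ((measurable_pi_apply j).comp (hmeas i t)) ω ω' hrel
    · intro ω
      exact hgpos ω
    · intro ω ω' hrel
      exact (measurable_iff_mRel (M.F T) g).1 hgmeas ω ω' hrel
    · intro ω
      have hcong : etaHist α x (fun u => M.S u ω) (fun u => M.r u ω)
          (fun i t => vsNv T d p i t ω) T T
          = etaHist α x (fun u => M.S u ω) (fun u => M.r u ω)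
            (fun i t => N i t ω) T T := by
        exact etaHist_congr α x _ _
          (fun i t hi ht j => hval i t hi ht ω j) T (le_refl T) T
      show M.V α x N ω - g ω = _ - v (Sum.inr ω)
      rw [hcong]
      rfl
  · rintro ⟨p, ⟨h1, h2, h3, h4, h5, h6, h7, h8⟩, rfl⟩
    refine ⟨fun i t ω => vsNv T d p i t ω, ⟨?_, ?_, ?_, ?_, ?_⟩,
      fun ω => p.1 (Sum.inr ω), ?_, ?_, ?_⟩
    · intro i t
      refine measurable_mRel_pi (M.F t) _ fun ω ω' hrel => ?_
      funext j
      by_cases h : i ≤ T ∧ t ≤ T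
      · exact h5 ⟨i, by omega⟩ ⟨t, by omega⟩ j ω ω' hrel
      · show vsNv T d p i t ω j = vsNv T d p i t ω' j
        unfold vsNv
        rw [dif_neg h, dif_neg h]
    · intro i t ω j
      by_cases h : i ≤ T ∧ t ≤ T
      · exact h1 ⟨i, by omega⟩ ⟨t, by omega⟩ ω j
      · show (0:ℝ) ≤ vsNv T d p i t ω j
        unfold vsNv
        rw [dif_neg h]
    · intro i t hit htT ω j
      exact h2 ⟨i, by omega⟩ ⟨t, by omega⟩ ω j hit htT
    · intro i ω j
      by_cases hi : i ≤ T
      · exact h3 ⟨i, by omega⟩ ω j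
      · show vsNv T d p i T ω j = 0
        unfold vsNv
        rw [dif_neg (by omega)]
    · intro i t hti ω j
      by_cases h : i ≤ T ∧ t ≤ T
      · exact h4 ⟨i, by omega⟩ ⟨t, by omega⟩ ω j hti
      · show vsNv T d p i t ω j = 0
        unfold vsNv
        rw [dif_neg h]
    · exact (measurable_iff_mRel (M.F T) _).2 h7
    · exact h6
    · funext ω
      exact h8 ω

end Assembly

/-- On a finite probability space, the set of attainable after-tax terminal
wealths `{V^α(x,N) : N ∈ 𝒩} - L^0(F_T; ℝ₊)` is closed with respect to the supremum norm
(the product topology on `Ω → ℝ` for finite `Ω`), even if no-arbitrage fails. -/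
theorem Vset_isClosed_of_finite [Fintype Ω]
    (M : Market Ω T d) (α : ℝ) (hα0 : 0 ≤ α) (hα1 : α < 1) (x : ℝ) :
    IsClosed (M.Vset α x) := by
  rw [vsK_eq M α x]
  exact (pUn_image_snd_fun (pUn_vsK M α x)).isClosed

end
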